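/- In the abstract tensor setting, suppose 1 ≤ m < n and there exist z_1, …, z_m ∈ T with z_1 + ⋯ + z_m ≤ e ≤ n·z_j for all j ((m,n)-decomposability of e). If x_1, …, x_m, y ∈ S satisfy n·x_j ≤ y for all j, then (x_1 + ⋯ + x_m) ⊗ e ≤ y ⊗ e. -/

import Mathlib

private lemma tensor_sum_left {S T U : Type*} [AddCommMonoid S] [AddCommMonoid T]
    [AddCommMonoid U] (tensor : S → T → U)
    (haddl : ∀ (x₁ x₂ : S) (y : T), tensor (x₁ + x₂) y = tensor x₁ y + tensor x₂ y) :
    ∀ (k : ℕ) (f : Fin (k + 1) → S) (y : T),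
      tensor (∑ i, f i) y = ∑ i, tensor (f i) y := by
  intro k
  induction k with
  | zero => intro f y; simp
  | succ k ih =>
      intro f y
      rw [Fin.sum_univ_succ f, haddl, ih, Fin.sum_univ_succ (f := fun i => tensor (f i) y)]

private lemma tensor_sum_right {S T U : Type*} [AddCommMonoid S] [AddCommMonoid T]
    [AddCommMonoid U] (tensor : S → T → U)
    (haddr : ∀ (x : S) (y₁ y₂ : T), tensor x (y₁ + y₂) = tensor x y₁ + tensor x y₂) :
    ∀ (k : ℕ) (f : Fin (k + 1) → T) (x : S),
      tensor x (∑ i, f i) = ∑ i, tensor x (f i) := by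
  intro k
  induction k with
  | zero => intro f x; simp
  | succ k ih =>
      intro f x
      rw [Fin.sum_univ_succ f, haddr, ih, Fin.sum_univ_succ (f := fun i => tensor x (f i))]

private lemma tensor_smul_shift {S T U : Type*} [AddCommMonoid S] [AddCommMonoid T]
    [AddCommMonoid U] (tensor : S → T → U)
    (haddl : ∀ (x₁ x₂ : S) (y : T), tensor (x₁ + x₂) y = tensor x₁ y + tensor x₂ y)
    (haddr : ∀ (x : S) (y₁ y₂ : T), tensor x (y₁ + y₂) = tensor x y₁ + tensor x y₂) :
    ∀ (k : ℕ) (x : S) (z : T),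
      tensor x ((k + 1) • z) = tensor ((k + 1) • x) z := by
  intro k
  induction k with
  | zero => intro x z; simp
  | succ k ih =>
      intro x z
      rw [succ_nsmul z (k + 1), haddr, ih, succ_nsmul x (k + 1), haddl]

/-- Abstract tensor setting.  If `1 ≤ m < n` and there are
`z 1, …, z m ∈ T` with `z 1 + ⋯ + z m ≤ e ≤ n • z j` for all `j`
(`(m,n)`-decomposability of `e`), and `x 1, …, x m, y ∈ S` satisfy `n • x j ≤ y`
for all `j`, then `(x 1 + ⋯ + x m) ⊗ e ≤ y ⊗ e`. -/
theorem tensor_comparison_decomposable {S T U : Type*}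
    [AddCommMonoid S] [PartialOrder S] [IsOrderedAddMonoid S]
    [AddCommMonoid T] [PartialOrder T] [IsOrderedAddMonoid T]
    [AddCommMonoid U] [PartialOrder U] [IsOrderedAddMonoid U]
    (tensor : S → T → U)
    (haddl : ∀ (x₁ x₂ : S) (y : T), tensor (x₁ + x₂) y = tensor x₁ y + tensor x₂ y)
    (haddr : ∀ (x : S) (y₁ y₂ : T), tensor x (y₁ + y₂) = tensor x y₁ + tensor x y₂)
    (hmono : ∀ (x₁ x₂ : S) (y₁ y₂ : T), x₁ ≤ x₂ → y₁ ≤ y₂ → tensor x₁ y₁ ≤ tensor x₂ y₂)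
    (m n : ℕ) (hm : 1 ≤ m) (hmn : m < n)
    (e : T) (z : Fin m → T) (hz₁ : ∑ j, z j ≤ e) (hz₂ : ∀ j, e ≤ n • z j)
    (x : Fin m → S) (y : S) (hxy : ∀ j, n • x j ≤ y) :
    tensor (∑ j, x j) e ≤ tensor y e := by
  obtain ⟨m', rfl⟩ : ∃ m', m = m' + 1 := ⟨m - 1, by omega⟩
  obtain ⟨n', rfl⟩ : ∃ n', n = n' + 1 := ⟨n - 1, by omega⟩
  calc tensor (∑ j, x j) e = ∑ j, tensor (x j) e := tensor_sum_left tensor haddl m' x e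
    _ ≤ ∑ j, tensor (x j) ((n' + 1) • z j) :=
        Finset.sum_le_sum fun j _ => hmono _ _ _ _ le_rfl (hz₂ j)
    _ = ∑ j, tensor ((n' + 1) • x j) (z j) := by
        refine Finset.sum_congr rfl fun j _ => ?_
        exact tensor_smul_shift tensor haddl haddr n' (x j) (z j)
    _ ≤ ∑ j, tensor y (z j) :=
        Finset.sum_le_sum fun j _ => hmono _ _ _ _ (hxy j) le_rfl
    _ = tensor y (∑ j, z j) := (tensor_sum_right tensor haddr m' z y).symm
    _ ≤ tensor y e := hmono _ _ _ _ le_rfl hz₁
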